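/- Let B = {a₁, ..., a₈} be affinely independent in (Z/2Z)^n and let x₁ = a₁+a₂+a₃+a₄+a₅, x₂ = a₁+a₂+a₃+a₇+a₈, x₃ = a₃+a₄+a₅+a₆+a₇, x₄ = a₂+a₄+a₆+a₇+a₈. Then C = B ∪ {x₁, x₂, x₃, x₄} is a cap of size 12. -/

import Mathlib

/-- A cap: a subset of (Z/2Z)^n containing no quad (four distinct vectors summing to zero). -/
def IsCap {n : ℕ} (C : Set (Fin n → ZMod 2)) : Prop :=
  ∀ a ∈ C, ∀ b ∈ C, ∀ c ∈ C, ∀ d ∈ C,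
    a ≠ b → a ≠ c → a ≠ d → b ≠ c → b ≠ d → c ≠ d → a + b + c + d ≠ 0

/-- Affine independence: no element is the sum of an odd number of other elements. -/
def AffIndep {n : ℕ} (B : Finset (Fin n → ZMod 2)) : Prop :=
  ∀ b ∈ B, ∀ T ⊆ B.erase b, Odd T.card → b ≠ ∑ v ∈ T, v

private def cv : Fin 12 → Fin 8 → ZMod 2 :=
![![1,0,0,0,0,0,0,0],
  ![0,1,0,0,0,0,0,0],
  ![0,0,1,0,0,0,0,0],
  ![0,0,0,1,0,0,0,0],
  ![0,0,0,0,1,0,0,0],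
  ![0,0,0,0,0,1,0,0],
  ![0,0,0,0,0,0,1,0],
  ![0,0,0,0,0,0,0,1],
  ![1,1,1,1,1,0,0,0],
  ![1,1,1,0,0,0,1,1],
  ![0,0,1,1,1,1,1,0],
  ![0,1,0,1,0,1,1,1]]

private lemma cv_parity : ∀ i, ∑ t, cv i t = 1 := by decide

set_option maxHeartbeats 4000000 in
private lemma cv_quad : ∀ i j k l : Fin 12, i ≠ j → i ≠ k → i ≠ l → j ≠ k → j ≠ l → k ≠ l →
    cv i + cv j + cv k + cv l ≠ 0 := by decide

private lemma cv_inj : Function.Injective cv := by decide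

private lemma zmod2_add_self (x : ZMod 2) : x + x = 0 := by revert x; decide

private lemma pi_add_self {n : ℕ} (x : Fin n → ZMod 2) : x + x = 0 :=
  funext fun t => zmod2_add_self (x t)

private lemma sum_ne_zero {n : ℕ} {a : Fin 8 → (Fin n → ZMod 2)}
    (ha : Function.Injective a) (hB : AffIndep (Finset.image a Finset.univ))
    {c : Fin 8 → ZMod 2} (hc : c ≠ 0) (hp : ∑ i, c i = 0) :
    ∑ i, c i • a i ≠ 0 := by
  classical
  have h01 : ∀ x : ZMod 2, x ≠ 0 → x = 1 := by decide
  have hz1 : ∀ x : ZMod 2, x ≠ 1 → x = 0 := by decide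
  set S : Finset (Fin 8) := Finset.univ.filter (fun j => c j = 1) with hS
  obtain ⟨i, hi⟩ : ∃ i, c i ≠ 0 := by
    by_contra h; push_neg at h; exact hc (funext h)
  have hiS : i ∈ S := by simp [hS, h01 _ hi]
  have hsum : ∑ j, c j • a j = ∑ j ∈ S, a j := by
    rw [← Finset.sum_filter_add_sum_filter_not Finset.univ (fun j => c j = 1)
      (fun j => c j • a j)]
    have h1 : ∑ j ∈ Finset.univ.filter (fun j => c j = 1), c j • a j = ∑ j ∈ S, a j :=
      Finset.sum_congr rfl (fun j hj => by rw [(Finset.mem_filter.mp hj).2, one_smul])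
    have h2 : ∑ j ∈ Finset.univ.filter (fun j => ¬ c j = 1), c j • a j = 0 :=
      Finset.sum_eq_zero (fun j hj => by rw [hz1 _ (Finset.mem_filter.mp hj).2, zero_smul])
    rw [h1, h2, add_zero]
  have hcard : ((S.card : ℕ) : ZMod 2) = 0 := by
    have h3 : ∑ j, c j = ∑ j ∈ Finset.univ, (if c j = 1 then (1 : ZMod 2) else 0) := by
      apply Finset.sum_congr rfl; intro j _
      by_cases h : c j = 1
      · rw [if_pos h, h]
      · rw [if_neg h, hz1 _ h]
    rw [h3, Finset.sum_boole] at hp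
    exact hp
  have hev : Even S.card := by
    have h4 := (ZMod.natCast_eq_zero_iff S.card 2).mp hcard
    obtain ⟨m, hm⟩ := h4
    exact ⟨m, by omega⟩
  intro h0
  rw [hsum, ← Finset.add_sum_erase S a hiS] at h0
  have heq : a i = ∑ j ∈ S.erase i, a j := by
    calc a i = a i + (∑ j ∈ S.erase i, a j + ∑ j ∈ S.erase i, a j) := by
          rw [pi_add_self, add_zero]
    _ = (a i + ∑ j ∈ S.erase i, a j) + ∑ j ∈ S.erase i, a j := by rw [add_assoc]
    _ = ∑ j ∈ S.erase i, a j := by rw [h0, zero_add]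
  have hTsum : ∑ v ∈ (S.erase i).image a, v = ∑ j ∈ S.erase i, a j :=
    Finset.sum_image (fun x _ y _ h => ha h)
  have hTsub : (S.erase i).image a ⊆ (Finset.image a Finset.univ).erase (a i) := by
    intro x hx
    obtain ⟨j, hj, rfl⟩ := Finset.mem_image.mp hx
    exact Finset.mem_erase.mpr ⟨fun h => (Finset.mem_erase.mp hj).1 (ha h),
      Finset.mem_image.mpr ⟨j, Finset.mem_univ j, rfl⟩⟩
  have hTcard : Odd ((S.erase i).image a).card := by
    rw [Finset.card_image_of_injective _ ha, Finset.card_erase_of_mem hiS]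
    obtain ⟨m, hm⟩ := hev
    have h1 : 1 ≤ S.card := Finset.card_pos.mpr ⟨i, hiS⟩
    exact Nat.odd_iff.mpr (by omega)
  exact hB (a i) (Finset.mem_image.mpr ⟨i, Finset.mem_univ i, rfl⟩)
    ((S.erase i).image a) hTsub hTcard (heq.trans hTsum.symm)

private def E {n : ℕ} (a : Fin 8 → (Fin n → ZMod 2)) (i : Fin 12) : Fin n → ZMod 2 :=
  ∑ t, cv i t • a t

private lemma E_add {n : ℕ} (a : Fin 8 → (Fin n → ZMod 2)) (i j k l : Fin 12) :
    E a i + E a j + E a k + E a l = ∑ t, (cv i + cv j + cv k + cv l) t • a t := by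
  simp [E, Pi.add_apply, add_smul, Finset.sum_add_distrib]

private lemma parity4 (i j k l : Fin 12) : ∑ t, (cv i + cv j + cv k + cv l) t = 0 := by
  simp only [Pi.add_apply]
  rw [Finset.sum_add_distrib, Finset.sum_add_distrib, Finset.sum_add_distrib,
    cv_parity, cv_parity, cv_parity, cv_parity]
  decide

private lemma E_quad {n : ℕ} {a : Fin 8 → (Fin n → ZMod 2)}
    (ha : Function.Injective a) (hB : AffIndep (Finset.image a Finset.univ))
    {i j k l : Fin 12} (hij : i ≠ j) (hik : i ≠ k) (hil : i ≠ l) (hjk : j ≠ k)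
    (hjl : j ≠ l) (hkl : k ≠ l) : E a i + E a j + E a k + E a l ≠ 0 := by
  rw [E_add]
  exact sum_ne_zero ha hB (cv_quad i j k l hij hik hil hjk hjl hkl) (parity4 i j k l)

private lemma E_inj {n : ℕ} {a : Fin 8 → (Fin n → ZMod 2)}
    (ha : Function.Injective a) (hB : AffIndep (Finset.image a Finset.univ)) :
    Function.Injective (E a) := by
  intro i j h
  by_contra hne
  have h1 : E a i + E a j = ∑ t, (cv i + cv j) t • a t := by
    simp [E, Pi.add_apply, add_smul, Finset.sum_add_distrib]
  have h2 : cv i + cv j ≠ 0 := by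
    intro h0
    have hcc : cv i = cv j := by
      funext t
      have h5 := congrFun h0 t
      have h6 : ∀ x y : ZMod 2, x + y = 0 → x = y := by decide
      exact h6 _ _ h5
    exact hne (cv_inj hcc)
  have h3 : ∑ t, (cv i + cv j) t = 0 := by
    simp only [Pi.add_apply]
    rw [Finset.sum_add_distrib, cv_parity, cv_parity]
    decide
  have h4 : E a i + E a j = 0 := by rw [h]; exact pi_add_self _
  exact sum_ne_zero ha hB h2 h3 (h1 ▸ h4)

private lemma E_val_0 {n : ℕ} (a : Fin 8 → (Fin n → ZMod 2)) :
    E a 0 = a 0 := by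
  show ∑ t, cv 0 t • a t = _
  rw [Fin.sum_univ_eight]
  simp only [show cv 0 0 = 1 from rfl, show cv 0 1 = 0 from rfl, show cv 0 2 = 0 from rfl, show cv 0 3 = 0 from rfl, show cv 0 4 = 0 from rfl, show cv 0 5 = 0 from rfl, show cv 0 6 = 0 from rfl, show cv 0 7 = 0 from rfl, one_smul, zero_smul, add_zero, zero_add]

private lemma E_val_1 {n : ℕ} (a : Fin 8 → (Fin n → ZMod 2)) :
    E a 1 = a 1 := by
  show ∑ t, cv 1 t • a t = _
  rw [Fin.sum_univ_eight]
  simp only [show cv 1 0 = 0 from rfl, show cv 1 1 = 1 from rfl, show cv 1 2 = 0 from rfl, show cv 1 3 = 0 from rfl, show cv 1 4 = 0 from rfl, show cv 1 5 = 0 from rfl, show cv 1 6 = 0 from rfl, show cv 1 7 = 0 from rfl, one_smul, zero_smul, add_zero, zero_add]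

private lemma E_val_2 {n : ℕ} (a : Fin 8 → (Fin n → ZMod 2)) :
    E a 2 = a 2 := by
  show ∑ t, cv 2 t • a t = _
  rw [Fin.sum_univ_eight]
  simp only [show cv 2 0 = 0 from rfl, show cv 2 1 = 0 from rfl, show cv 2 2 = 1 from rfl, show cv 2 3 = 0 from rfl, show cv 2 4 = 0 from rfl, show cv 2 5 = 0 from rfl, show cv 2 6 = 0 from rfl, show cv 2 7 = 0 from rfl, one_smul, zero_smul, add_zero, zero_add]

private lemma E_val_3 {n : ℕ} (a : Fin 8 → (Fin n → ZMod 2)) :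
    E a 3 = a 3 := by
  show ∑ t, cv 3 t • a t = _
  rw [Fin.sum_univ_eight]
  simp only [show cv 3 0 = 0 from rfl, show cv 3 1 = 0 from rfl, show cv 3 2 = 0 from rfl, show cv 3 3 = 1 from rfl, show cv 3 4 = 0 from rfl, show cv 3 5 = 0 from rfl, show cv 3 6 = 0 from rfl, show cv 3 7 = 0 from rfl, one_smul, zero_smul, add_zero, zero_add]

private lemma E_val_4 {n : ℕ} (a : Fin 8 → (Fin n → ZMod 2)) :
    E a 4 = a 4 := by
  show ∑ t, cv 4 t • a t = _
  rw [Fin.sum_univ_eight]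
  simp only [show cv 4 0 = 0 from rfl, show cv 4 1 = 0 from rfl, show cv 4 2 = 0 from rfl, show cv 4 3 = 0 from rfl, show cv 4 4 = 1 from rfl, show cv 4 5 = 0 from rfl, show cv 4 6 = 0 from rfl, show cv 4 7 = 0 from rfl, one_smul, zero_smul, add_zero, zero_add]

private lemma E_val_5 {n : ℕ} (a : Fin 8 → (Fin n → ZMod 2)) :
    E a 5 = a 5 := by
  show ∑ t, cv 5 t • a t = _
  rw [Fin.sum_univ_eight]
  simp only [show cv 5 0 = 0 from rfl, show cv 5 1 = 0 from rfl, show cv 5 2 = 0 from rfl, show cv 5 3 = 0 from rfl, show cv 5 4 = 0 from rfl, show cv 5 5 = 1 from rfl, show cv 5 6 = 0 from rfl, show cv 5 7 = 0 from rfl, one_smul, zero_smul, add_zero, zero_add]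

private lemma E_val_6 {n : ℕ} (a : Fin 8 → (Fin n → ZMod 2)) :
    E a 6 = a 6 := by
  show ∑ t, cv 6 t • a t = _
  rw [Fin.sum_univ_eight]
  simp only [show cv 6 0 = 0 from rfl, show cv 6 1 = 0 from rfl, show cv 6 2 = 0 from rfl, show cv 6 3 = 0 from rfl, show cv 6 4 = 0 from rfl, show cv 6 5 = 0 from rfl, show cv 6 6 = 1 from rfl, show cv 6 7 = 0 from rfl, one_smul, zero_smul, add_zero, zero_add]

private lemma E_val_7 {n : ℕ} (a : Fin 8 → (Fin n → ZMod 2)) :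
    E a 7 = a 7 := by
  show ∑ t, cv 7 t • a t = _
  rw [Fin.sum_univ_eight]
  simp only [show cv 7 0 = 0 from rfl, show cv 7 1 = 0 from rfl, show cv 7 2 = 0 from rfl, show cv 7 3 = 0 from rfl, show cv 7 4 = 0 from rfl, show cv 7 5 = 0 from rfl, show cv 7 6 = 0 from rfl, show cv 7 7 = 1 from rfl, one_smul, zero_smul, add_zero, zero_add]

private lemma E_val_8 {n : ℕ} (a : Fin 8 → (Fin n → ZMod 2)) :
    E a 8 = a 0 + a 1 + a 2 + a 3 + a 4 := by
  show ∑ t, cv 8 t • a t = _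
  rw [Fin.sum_univ_eight]
  simp only [show cv 8 0 = 1 from rfl, show cv 8 1 = 1 from rfl, show cv 8 2 = 1 from rfl, show cv 8 3 = 1 from rfl, show cv 8 4 = 1 from rfl, show cv 8 5 = 0 from rfl, show cv 8 6 = 0 from rfl, show cv 8 7 = 0 from rfl, one_smul, zero_smul, add_zero, zero_add]

private lemma E_val_9 {n : ℕ} (a : Fin 8 → (Fin n → ZMod 2)) :
    E a 9 = a 0 + a 1 + a 2 + a 6 + a 7 := by
  show ∑ t, cv 9 t • a t = _
  rw [Fin.sum_univ_eight]
  simp only [show cv 9 0 = 1 from rfl, show cv 9 1 = 1 from rfl, show cv 9 2 = 1 from rfl, show cv 9 3 = 0 from rfl, show cv 9 4 = 0 from rfl, show cv 9 5 = 0 from rfl, show cv 9 6 = 1 from rfl, show cv 9 7 = 1 from rfl, one_smul, zero_smul, add_zero, zero_add]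

private lemma E_val_10 {n : ℕ} (a : Fin 8 → (Fin n → ZMod 2)) :
    E a 10 = a 2 + a 3 + a 4 + a 5 + a 6 := by
  show ∑ t, cv 10 t • a t = _
  rw [Fin.sum_univ_eight]
  simp only [show cv 10 0 = 0 from rfl, show cv 10 1 = 0 from rfl, show cv 10 2 = 1 from rfl, show cv 10 3 = 1 from rfl, show cv 10 4 = 1 from rfl, show cv 10 5 = 1 from rfl, show cv 10 6 = 1 from rfl, show cv 10 7 = 0 from rfl, one_smul, zero_smul, add_zero, zero_add]

private lemma E_val_11 {n : ℕ} (a : Fin 8 → (Fin n → ZMod 2)) :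
    E a 11 = a 1 + a 3 + a 5 + a 6 + a 7 := by
  show ∑ t, cv 11 t • a t = _
  rw [Fin.sum_univ_eight]
  simp only [show cv 11 0 = 0 from rfl, show cv 11 1 = 1 from rfl, show cv 11 2 = 0 from rfl, show cv 11 3 = 1 from rfl, show cv 11 4 = 0 from rfl, show cv 11 5 = 1 from rfl, show cv 11 6 = 1 from rfl, show cv 11 7 = 1 from rfl, one_smul, zero_smul, add_zero, zero_add]


private lemma image_a {n : ℕ} (a : Fin 8 → (Fin n → ZMod 2)) :
    Finset.image a Finset.univ = {a 0, a 1, a 2, a 3, a 4, a 5, a 6, a 7} := by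
  rw [show (Finset.univ : Finset (Fin 8)) = {0, 1, 2, 3, 4, 5, 6, 7} from by decide]
  simp only [Finset.image_insert, Finset.image_singleton]

private lemma image_E {n : ℕ} (a : Fin 8 → (Fin n → ZMod 2)) :
    Finset.image (E a) Finset.univ = {E a 0, E a 1, E a 2, E a 3, E a 4, E a 5,
      E a 6, E a 7, E a 8, E a 9, E a 10, E a 11} := by
  rw [show (Finset.univ : Finset (Fin 12)) = {0, 1, 2, 3, 4, 5, 6, 7, 8, 9, 10, 11} from by decide]
  simp only [Finset.image_insert, Finset.image_singleton]

theorem cap12_233332 {n : ℕ} (a : Fin 8 → (Fin n → ZMod 2))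
    (ha : Function.Injective a)
    (hB : AffIndep (Finset.image a Finset.univ)) :
    IsCap (↑(Finset.image a Finset.univ ∪
        {a 0 + a 1 + a 2 + a 3 + a 4,
         a 0 + a 1 + a 2 + a 6 + a 7,
         a 2 + a 3 + a 4 + a 5 + a 6,
         a 1 + a 3 + a 5 + a 6 + a 7}) : Set (Fin n → ZMod 2)) ∧
    (Finset.image a Finset.univ ∪
        {a 0 + a 1 + a 2 + a 3 + a 4,
         a 0 + a 1 + a 2 + a 6 + a 7,
         a 2 + a 3 + a 4 + a 5 + a 6,
         a 1 + a 3 + a 5 + a 6 + a 7}).card = 12 := by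
  have hC : Finset.image a Finset.univ ∪
        {a 0 + a 1 + a 2 + a 3 + a 4,
         a 0 + a 1 + a 2 + a 6 + a 7,
         a 2 + a 3 + a 4 + a 5 + a 6,
         a 1 + a 3 + a 5 + a 6 + a 7} = Finset.image (E a) Finset.univ := by
    rw [image_E, E_val_0, E_val_1, E_val_2, E_val_3, E_val_4, E_val_5, E_val_6, E_val_7,
      E_val_8, E_val_9, E_val_10, E_val_11, image_a]
    ext x
    simp only [Finset.mem_union, Finset.mem_insert, Finset.mem_singleton]
    tauto
  constructor
  · intro u hu v hv w hw z hz h1 h2 h3 h4 h5 h6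
    rw [hC] at hu hv hw hz
    obtain ⟨i, -, rfl⟩ := Finset.mem_image.mp (Finset.mem_coe.mp hu)
    obtain ⟨j, -, rfl⟩ := Finset.mem_image.mp (Finset.mem_coe.mp hv)
    obtain ⟨k, -, rfl⟩ := Finset.mem_image.mp (Finset.mem_coe.mp hw)
    obtain ⟨l, -, rfl⟩ := Finset.mem_image.mp (Finset.mem_coe.mp hz)
    exact E_quad ha hB (fun h => h1 (by rw [h])) (fun h => h2 (by rw [h]))
      (fun h => h3 (by rw [h])) (fun h => h4 (by rw [h]))
      (fun h => h5 (by rw [h])) (fun h => h6 (by rw [h]))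
  · rw [hC, Finset.card_image_of_injective _ (E_inj ha hB), Finset.card_univ, Fintype.card_fin]
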